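/- Let R = k[[x_1, ..., x_n]] and let I ⊆ R be an ideal generated by homogeneous polynomials f_1, ..., f_s ∈ k[x_1, ..., x_n]. Then for every m ≥ 0, the m-th jet closure of I equals I + m^{m+1}, where m is the maximal ideal (x_1, ..., x_n) of R. -/

import Mathlib

open Polynomial

/-- The truncated polynomial ring `A[t]/(t^(m+1))`. -/
abbrev JetTrunc (A : Type) [CommRing A] (m : ℕ) : Type :=
  Polynomial A ⧸ (Ideal.span {(X : Polynomial A) ^ (m + 1)} : Ideal (Polynomial A))

/-- The image of the variable `t` in `A[t]/(t^(m+1))`. -/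
noncomputable def jetT (A : Type) [CommRing A] (m : ℕ) : JetTrunc A m :=
  Ideal.Quotient.mk _ (X : Polynomial A)

/-- A test datum for the `m`-th jet closure of an ideal `I` of a local `k`-algebra `(R, 𝔪)`:
a `k`-algebra `A` together with a `k`-algebra map `φ : R → A[t]/(t^(m+1))` killing `I`
and sending the maximal ideal `𝔪` into `(t)` (i.e. an `A`-point of the scheme of local
`m`-jets of `Spec (R/I)` over the closed point). -/
structure JetTest (k : Type) [CommRing k] {R : Type} [CommRing R] [Algebra k R]
    (𝔪 : Ideal R) (m : ℕ) (I : Ideal R) where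
  A : Type
  [instCommRing : CommRing A]
  [instAlgebra : Algebra k A]
  φ : R →ₐ[k] JetTrunc A m
  ker_I : ∀ f ∈ I, φ f = 0
  max_to_t : ∀ f ∈ 𝔪, φ f ∈ Ideal.span {jetT A m}

attribute [instance] JetTest.instCommRing JetTest.instAlgebra

/-- The `m`-th jet closure `I^{m-jc}` of an ideal `I` in a local `k`-algebra `(R, 𝔪)`:
the intersection of the kernels of all jet test maps (functor-of-points description of the
kernel of `μ_m : R → R_m[t]/(t^(m+1), I_m, 𝔪^e)`). -/
noncomputable def jetClosure (k : Type) [CommRing k] {R : Type} [CommRing R] [Algebra k R]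
    (𝔪 : Ideal R) (m : ℕ) (I : Ideal R) : Ideal R :=
  sInf { J : Ideal R | ∃ T : JetTest k 𝔪 m I, J = RingHom.ker T.φ }

/-- The maximal ideal `(x_1, ..., x_n)` of the formal power series ring `k[[x_1, ..., x_n]]`. -/
noncomputable def mIdeal (k : Type) [Field k] (n : ℕ) : Ideal (MvPowerSeries (Fin n) k) :=
  RingHom.ker (MvPowerSeries.constantCoeff : MvPowerSeries (Fin n) k →+* k)

namespace JetAux

open MvPowerSeries

variable {k : Type} [CommRing k] {n : ℕ}

lemma degree_sum_univ (d : Fin n →₀ ℕ) : d.degree = ∑ i, d i := by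
  rw [Finsupp.degree]
  exact Finset.sum_subset (Finset.subset_univ _)
    (fun i _ hi => Finsupp.notMem_support_iff.mp hi)

lemma degree_add' (a b : Fin n →₀ ℕ) : (a + b).degree = a.degree + b.degree := by
  simp only [Finsupp.degree_eq_weight_one, map_add]

lemma degree_single' (i : Fin n) : (Finsupp.single i 1).degree = 1 := by
  exact Finsupp.degree_single i 1

/-- The finset of exponents of total degree `e`. -/
noncomputable def D (n e : ℕ) : Finset (Fin n →₀ ℕ) :=
  (Finset.Nat.antidiagonalTuple n e).map
    ⟨Finsupp.equivFunOnFinite.symm, Finsupp.equivFunOnFinite.symm.injective⟩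

lemma mem_D {e : ℕ} {d : Fin n →₀ ℕ} : d ∈ D n e ↔ d.degree = e := by
  simp only [D, Finset.mem_map, Function.Embedding.coeFn_mk]
  constructor
  · rintro ⟨x, hx, rfl⟩
    rw [Finset.Nat.mem_antidiagonalTuple] at hx
    rw [degree_sum_univ]
    simpa using hx
  · intro h
    refine ⟨Finsupp.equivFunOnFinite d, ?_, by simp⟩
    rw [Finset.Nat.mem_antidiagonalTuple]
    rw [degree_sum_univ] at h
    simpa using h

/-- The degree-`e` homogeneous part of a power series, as a polynomial. -/
noncomputable def degPart (e : ℕ) (g : MvPowerSeries (Fin n) k) : MvPolynomial (Fin n) k :=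
  ∑ d ∈ D n e, MvPolynomial.monomial d (MvPowerSeries.coeff d g)

lemma coeff_degPart (e : ℕ) (g : MvPowerSeries (Fin n) k) (u : Fin n →₀ ℕ) :
    (degPart e g).coeff u =
      if u.degree = e then MvPowerSeries.coeff u g else 0 := by
  classical
  rw [degPart, MvPolynomial.coeff_sum]
  simp only [MvPolynomial.coeff_monomial]
  rw [Finset.sum_ite_eq' (D n e) u (fun d => MvPowerSeries.coeff d g)]
  simp only [mem_D]

lemma degPart_zero (e : ℕ) : degPart e (0 : MvPowerSeries (Fin n) k) = 0 := by
  simp [degPart]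

lemma degPart_add (e : ℕ) (g h : MvPowerSeries (Fin n) k) :
    degPart e (g + h) = degPart e g + degPart e h := by
  classical
  ext u
  simp only [coeff_degPart, MvPolynomial.coeff_add, map_add]
  split <;> simp

lemma degPart_one (e : ℕ) :
    degPart e (1 : MvPowerSeries (Fin n) k) = if e = 0 then 1 else 0 := by
  classical
  ext u
  rw [coeff_degPart, MvPowerSeries.coeff_one]
  by_cases hu : u = 0
  · subst hu
    simp [map_zero, eq_comm, MvPolynomial.coeff_one, apply_ite (MvPolynomial.coeff 0)]
  · have : u.degree ≠ 0 := fun h => hu ((Finsupp.degree_eq_zero_iff u).mp h)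
    by_cases he : e = 0
    · subst he
      simp [hu, this, MvPolynomial.coeff_one, eq_comm]
    · simp [hu, he, MvPolynomial.coeff_one]

lemma degPart_C (e : ℕ) (c : k) :
    degPart e (MvPowerSeries.C (σ := Fin n) c) = if e = 0 then MvPolynomial.C c else 0 := by
  classical
  ext u
  rw [coeff_degPart, MvPowerSeries.coeff_C]
  by_cases hu : u = 0
  · subst hu
    simp [map_zero, eq_comm, MvPolynomial.coeff_C, apply_ite (MvPolynomial.coeff 0)]
  · have : u.degree ≠ 0 := fun h => hu ((Finsupp.degree_eq_zero_iff u).mp h)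
    by_cases he : e = 0
    · subst he
      simp [hu, this, MvPolynomial.coeff_C, eq_comm]
    · simp [hu, he, MvPolynomial.coeff_C, eq_comm]

lemma degPart_mul (g h : MvPowerSeries (Fin n) k) (e : ℕ) :
    degPart e (g * h) =
      ∑ p ∈ Finset.HasAntidiagonal.antidiagonal e, degPart p.1 g * degPart p.2 h := by
  classical
  ext u
  rw [coeff_degPart, MvPolynomial.coeff_sum]
  simp only [MvPolynomial.coeff_mul, coeff_degPart]
  rw [Finset.sum_comm]
  have step : ∀ q ∈ Finset.HasAntidiagonal.antidiagonal u,
      (∑ p ∈ Finset.HasAntidiagonal.antidiagonal e,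
        (if q.1.degree = p.1 then MvPowerSeries.coeff q.1 g else 0) *
          (if q.2.degree = p.2 then MvPowerSeries.coeff q.2 h else 0)) =
      if u.degree = e then
        MvPowerSeries.coeff q.1 g * MvPowerSeries.coeff q.2 h else 0 := by
    intro q hq
    rw [Finset.HasAntidiagonal.mem_antidiagonal] at hq
    have hsum : q.1.degree + q.2.degree = u.degree := by rw [← hq, degree_add']
    have hterm : ∀ p : ℕ × ℕ,
        (if q.1.degree = p.1 then MvPowerSeries.coeff q.1 g else 0) *
          (if q.2.degree = p.2 then MvPowerSeries.coeff q.2 h else 0) =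
        if (q.1.degree, q.2.degree) = p then
          MvPowerSeries.coeff q.1 g * MvPowerSeries.coeff q.2 h else 0 := by
      rintro ⟨p1, p2⟩
      by_cases h1 : q.1.degree = p1 <;> by_cases h2 : q.2.degree = p2 <;>
        simp [h1, h2, Prod.ext_iff]
    simp only [hterm]
    rw [Finset.sum_ite_eq]
    simp only [Finset.HasAntidiagonal.mem_antidiagonal, hsum]
  rw [Finset.sum_congr rfl step]
  by_cases hu : u.degree = e
  · simp [hu, MvPowerSeries.coeff_mul]
  · simp [hu]

/-- The `k`-algebra map `k[[x_1,...,x_n]] → (k[x]/I₀)[[t]]`, `x_i ↦ x̄_i t`. -/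
noncomputable def Phi (I₀ : Ideal (MvPolynomial (Fin n) k)) :
    MvPowerSeries (Fin n) k →ₐ[k] PowerSeries (MvPolynomial (Fin n) k ⧸ I₀) where
  toFun g := PowerSeries.mk fun e => Ideal.Quotient.mk I₀ (degPart e g)
  map_one' := by
    ext e
    simp only [PowerSeries.coeff_mk, degPart_one, PowerSeries.coeff_one,
      apply_ite (Ideal.Quotient.mk I₀), map_one, map_zero]
  map_mul' g h := by
    ext e
    rw [PowerSeries.coeff_mul]
    simp only [PowerSeries.coeff_mk, degPart_mul, map_sum, map_mul]
  map_zero' := by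
    ext e
    simp [degPart_zero]
  map_add' g h := by
    ext e
    simp [degPart_add]
  commutes' c := by
    ext e
    rw [MvPowerSeries.algebraMap_apply, PowerSeries.algebraMap_apply]
    simp only [Algebra.algebraMap_self, RingHom.id_apply, PowerSeries.coeff_mk,
      PowerSeries.coeff_C, degPart_C, apply_ite (Ideal.Quotient.mk I₀), map_zero]
    by_cases he : e = 0
    · simp only [he, if_true, ← MvPolynomial.algebraMap_eq, Ideal.Quotient.mk_algebraMap]
    · simp [he]

lemma Phi_apply (I₀ : Ideal (MvPolynomial (Fin n) k)) (g : MvPowerSeries (Fin n) k) :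
    Phi I₀ g = PowerSeries.mk fun e => Ideal.Quotient.mk I₀ (degPart e g) := rfl

/-- The truncation map `A[[t]] → A[t]/(t^(m+1))` as a `k`-algebra hom. -/
noncomputable def tauHom (k : Type) [CommRing k] (A : Type) [CommRing A] [Algebra k A]
    (m : ℕ) : PowerSeries A →ₐ[k] JetTrunc A m where
  toFun g := Ideal.Quotient.mk _ (PowerSeries.trunc (m + 1) g)
  map_one' := by
    show Ideal.Quotient.mk _ (PowerSeries.trunc (m + 1) (1 : PowerSeries A)) = 1
    rw [PowerSeries.trunc_one, map_one]
  map_mul' g h := by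
    have key : ∀ p : Polynomial A,
        Ideal.Quotient.mk (Ideal.span {(Polynomial.X : Polynomial A) ^ (m + 1)})
            (PowerSeries.trunc (m + 1) (p : PowerSeries A)) = Ideal.Quotient.mk _ p := by
      intro p
      rw [Ideal.Quotient.eq, Ideal.mem_span_singleton]
      rw [Polynomial.X_pow_dvd_iff]
      intro d hd
      simp [PowerSeries.coeff_trunc, hd, Polynomial.coeff_coe]
    show Ideal.Quotient.mk _ (PowerSeries.trunc (m + 1) (g * h)) = _
    rw [← map_mul, ← key (PowerSeries.trunc (m + 1) g * PowerSeries.trunc (m + 1) h),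
      Polynomial.coe_mul, PowerSeries.trunc_trunc_mul_trunc]
  map_zero' := by
    show Ideal.Quotient.mk _ (PowerSeries.trunc (m + 1) (0 : PowerSeries A)) = 0
    rw [map_zero, map_zero]
  map_add' g h := by
    show Ideal.Quotient.mk _ (PowerSeries.trunc (m + 1) (g + h)) = _
    rw [map_add, map_add]
  commutes' c := by
    show Ideal.Quotient.mk _ (PowerSeries.trunc (m + 1) (algebraMap k (PowerSeries A) c)) = _
    rw [PowerSeries.algebraMap_apply, PowerSeries.trunc_C,
      ← Polynomial.algebraMap_apply, Ideal.Quotient.mk_algebraMap]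

lemma tauHom_apply (k : Type) [CommRing k] (A : Type) [CommRing A] [Algebra k A]
    (m : ℕ) (g : PowerSeries A) :
    tauHom k A m g = Ideal.Quotient.mk _ (PowerSeries.trunc (m + 1) g) := rfl

end JetAux
lemma JetAux.mem_pow_mIdeal {k : Type} [Field k] {n : ℕ} (m : ℕ) :
    ∀ h : MvPowerSeries (Fin n) k,
      (∀ u : Fin n →₀ ℕ, u.degree ≤ m → MvPowerSeries.coeff u h = 0) →
      h ∈ (mIdeal k n) ^ (m + 1) := by
  induction m with
  | zero =>
    intro h hc
    rw [pow_one, mIdeal, RingHom.mem_ker, ← MvPowerSeries.coeff_zero_eq_constantCoeff_apply]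
    exact hc 0 (by simp [map_zero])
  | succ m ih =>
    intro h hc
    classical
    set hi : Fin n → MvPowerSeries (Fin n) k := fun i u =>
      if (u + Finsupp.single i 1).support.min = (i : WithTop (Fin n)) then
        MvPowerSeries.coeff (u + Finsupp.single i 1) h else 0 with hhi
    have coeff_hi : ∀ i u, MvPowerSeries.coeff u (hi i) =
        if (u + Finsupp.single i 1).support.min = (i : WithTop (Fin n)) then
          MvPowerSeries.coeff (u + Finsupp.single i 1) h else 0 := fun i u => rfl
    have hdecomp : h = ∑ i, MvPowerSeries.X i * hi i := by
      ext u
      rw [map_sum]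
      have hX : ∀ i : Fin n, MvPowerSeries.coeff u (MvPowerSeries.X i * hi i) =
          if u.support.min = (i : WithTop (Fin n)) then MvPowerSeries.coeff u h else 0 := by
        intro i
        rw [show (MvPowerSeries.X i : MvPowerSeries (Fin n) k)
            = MvPowerSeries.monomial (Finsupp.single i 1) 1 from rfl,
          MvPowerSeries.coeff_monomial_mul]
        by_cases hle : Finsupp.single i 1 ≤ u
        · rw [if_pos hle, one_mul, coeff_hi, tsub_add_cancel_of_le hle]
        · rw [if_neg hle, eq_comm, if_neg]
          intro hmin
          apply hle
          rw [Finsupp.single_le_iff]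
          have hmem : i ∈ u.support := Finset.mem_of_min hmin
          exact Nat.one_le_iff_ne_zero.mpr (Finsupp.mem_support_iff.mp hmem)
      rw [Finset.sum_congr rfl fun i _ => hX i]
      by_cases hu : u = 0
      · subst hu
        have hmin : (0 : Fin n →₀ ℕ).support.min = ⊤ := by simp
        have h0 : MvPowerSeries.coeff 0 h = 0 := hc 0 (by simp [map_zero])
        simp [hmin, h0]
      · have hne : u.support.Nonempty := Finsupp.support_nonempty_iff.mpr hu
        have hmin : u.support.min = ((u.support.min' hne : Fin n) : WithTop (Fin n)) :=
          (Finset.coe_min' hne).symm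
        rw [Finset.sum_eq_single (u.support.min' hne)]
        · rw [if_pos hmin]
        · intro b _ hb
          rw [if_neg]
          rw [hmin]
          exact fun hcontra => hb (WithTop.coe_inj.mp hcontra).symm
        · intro habs
          exact absurd (Finset.mem_univ _) habs
    have hmemhi : ∀ i, hi i ∈ (mIdeal k n) ^ (m + 1) := by
      intro i
      apply ih
      intro u hu
      rw [coeff_hi]
      split
      · apply hc
        rw [JetAux.degree_add', JetAux.degree_single']
        omega
      · rfl
    rw [hdecomp, pow_succ']
    apply Ideal.sum_mem
    intro i _
    refine Ideal.mul_mem_mul ?_ (hmemhi i)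
    rw [mIdeal, RingHom.mem_ker]
    exact MvPowerSeries.constantCoeff_X i
instance JetAux.isTwoSided_jet (A : Type) [CommRing A] (J : Ideal (Polynomial A)) :
    J.IsTwoSided := inferInstance
instance JetAux.isTwoSided_trunc (A : Type) [CommRing A] (m : ℕ) (J : Ideal (JetTrunc A m)) :
    J.IsTwoSided := inferInstance
/-- if `I ⊆ k[[x_1, ..., x_n]]` is extended from an ideal generated by
homogeneous polynomials `f_1, ..., f_s ∈ k[x_1, ..., x_n]`, then for every `m`,
`I^{m-jc} = I + 𝔪^(m+1)`. -/
theorem jetClosure_of_homogeneous (k : Type) [Field k] [IsAlgClosed k] [CharZero k]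
    (n s : ℕ) (f : Fin s → MvPolynomial (Fin n) k) (d : Fin s → ℕ)
    (hf : ∀ i, (f i).IsHomogeneous (d i)) (m : ℕ) :
    jetClosure k (mIdeal k n) m
        (Ideal.span (Set.range fun i => ((f i : MvPowerSeries (Fin n) k)))) =
      Ideal.span (Set.range fun i => ((f i : MvPowerSeries (Fin n) k))) ⊔
        (mIdeal k n) ^ (m + 1) := by
  classical
  set I : Ideal (MvPowerSeries (Fin n) k) :=
    Ideal.span (Set.range fun i => ((f i : MvPowerSeries (Fin n) k))) with hIdef
  set I₀ : Ideal (MvPolynomial (Fin n) k) := Ideal.span (Set.range f) with hI₀def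
  set φ₀ : MvPowerSeries (Fin n) k →ₐ[k] JetTrunc (MvPolynomial (Fin n) k ⧸ I₀) m :=
    (JetAux.tauHom k _ m).comp (JetAux.Phi I₀) with hφ₀def
  -- `φ₀` kills `I`
  have hkerI : ∀ g ∈ I, φ₀ g = 0 := by
    have hgen : ∀ i : Fin s, φ₀ ((f i : MvPowerSeries (Fin n) k)) = 0 := by
      intro i
      have hPhi : JetAux.Phi I₀ ((f i : MvPowerSeries (Fin n) k)) = 0 := by
        ext e
        rw [JetAux.Phi_apply, PowerSeries.coeff_mk, map_zero, Ideal.Quotient.eq_zero_iff_mem]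
        by_cases he : e = d i
        · have hdp : JetAux.degPart e ((f i : MvPowerSeries (Fin n) k)) = f i := by
            ext u
            rw [JetAux.coeff_degPart, MvPolynomial.coeff_coe]
            by_cases hu : u.degree = e
            · rw [if_pos hu]
            · rw [if_neg hu, eq_comm]
              exact (hf i).coeff_eq_zero (by rw [← he]; exact hu)
          rw [hdp]
          exact Ideal.subset_span ⟨i, rfl⟩
        · have hdp : JetAux.degPart e ((f i : MvPowerSeries (Fin n) k)) = 0 := by
            ext u
            rw [JetAux.coeff_degPart, MvPolynomial.coeff_coe, MvPolynomial.coeff_zero]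
            split
            · next hu => exact (hf i).coeff_eq_zero (by rw [hu]; exact he)
            · rfl
          rw [hdp]
          exact Ideal.zero_mem _
      rw [hφ₀def, AlgHom.comp_apply, hPhi, map_zero]
    intro g hg
    have hle : I ≤ RingHom.ker φ₀ := by
      rw [hIdef]
      refine Ideal.span_le.mpr ?_
      rintro x ⟨i, rfl⟩
      exact RingHom.mem_ker.mpr (hgen i)
    exact RingHom.mem_ker.mp (hle hg)
  -- `φ₀` sends `𝔪` into `(t)`
  have hmax : ∀ g ∈ mIdeal k n,
      φ₀ g ∈ Ideal.span {jetT (MvPolynomial (Fin n) k ⧸ I₀) m} := by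
    intro g hg
    have hg' : MvPowerSeries.constantCoeff g = 0 := RingHom.mem_ker.mp hg
    have h0 : (PowerSeries.trunc (m + 1) (JetAux.Phi I₀ g)).coeff 0 = 0 := by
      rw [PowerSeries.coeff_trunc, if_pos (Nat.succ_pos m), JetAux.Phi_apply,
        PowerSeries.coeff_mk]
      have hdp : JetAux.degPart 0 g = 0 := by
        ext u
        rw [JetAux.coeff_degPart, MvPolynomial.coeff_zero]
        split
        · next hu =>
            have hu0 : u = 0 := (Finsupp.degree_eq_zero_iff u).mp hu
            subst hu0
            rw [MvPowerSeries.coeff_zero_eq_constantCoeff_apply]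
            exact hg'
        · rfl
      rw [hdp, map_zero]
    obtain ⟨p', hp'⟩ := Polynomial.X_dvd_iff.mpr h0
    show Ideal.Quotient.mk _ (PowerSeries.trunc (m + 1) (JetAux.Phi I₀ g)) ∈ _
    rw [hp', map_mul]
    exact Ideal.mul_mem_right _ _ (Ideal.subset_span rfl)
  set T₀ : JetTest k (mIdeal k n) m I :=
    { A := MvPolynomial (Fin n) k ⧸ I₀
      φ := φ₀
      ker_I := hkerI
      max_to_t := hmax } with hT₀def
  apply le_antisymm
  · refine le_trans (sInf_le ⟨T₀, rfl⟩) ?_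
    intro g hg
    have hg' : φ₀ g = 0 := RingHom.mem_ker.mp hg
    have hg2 : Ideal.Quotient.mk
        (Ideal.span {(Polynomial.X : Polynomial (MvPolynomial (Fin n) k ⧸ I₀)) ^ (m + 1)})
        (PowerSeries.trunc (m + 1) (JetAux.Phi I₀ g)) = 0 := hg'
    have hparts : ∀ e, e ≤ m → JetAux.degPart e g ∈ I₀ := by
      intro e he
      have hmem := Ideal.Quotient.eq_zero_iff_mem.mp hg2
      obtain ⟨a, ha⟩ := Ideal.mem_span_singleton'.mp hmem
      replace hmem := Dvd.intro_left a ha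
      rw [Polynomial.X_pow_dvd_iff] at hmem
      have hcoeff := hmem e (Nat.lt_succ_of_le he)
      rw [PowerSeries.coeff_trunc, if_pos (Nat.lt_succ_of_le he), JetAux.Phi_apply,
        PowerSeries.coeff_mk] at hcoeff
      exact Ideal.Quotient.eq_zero_iff_mem.mp hcoeff
    set p₀ : MvPolynomial (Fin n) k := ∑ e ∈ Finset.range (m + 1), JetAux.degPart e g
      with hp₀def
    have hp₀I : (p₀ : MvPowerSeries (Fin n) k) ∈ I := by
      have h1 : p₀ ∈ I₀ :=
        Ideal.sum_mem _ fun e he => hparts e (Nat.lt_succ_iff.mp (Finset.mem_range.mp he))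
      have h2 := Ideal.mem_map_of_mem
        (MvPolynomial.coeToMvPowerSeries.ringHom (σ := Fin n) (R := k)) h1
      rw [hI₀def, Ideal.map_span, ← Set.range_comp] at h2
      rw [hIdef]
      simpa [MvPolynomial.coeToMvPowerSeries.ringHom_apply, Function.comp_def] using h2
    have htail : g - (p₀ : MvPowerSeries (Fin n) k) ∈ (mIdeal k n) ^ (m + 1) := by
      apply JetAux.mem_pow_mIdeal
      intro u hu
      rw [map_sub, MvPolynomial.coeff_coe, hp₀def, MvPolynomial.coeff_sum]
      simp only [JetAux.coeff_degPart]
      rw [Finset.sum_ite_eq (Finset.range (m + 1)) u.degree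
        (fun _ => MvPowerSeries.coeff u g),
        if_pos (Finset.mem_range.mpr (Nat.lt_succ_of_le hu)), sub_self]
    have hgsplit : g = (p₀ : MvPowerSeries (Fin n) k) + (g - p₀) := by ring
    rw [hgsplit]
    exact Ideal.add_mem _ (Ideal.mem_sup_left hp₀I) (Ideal.mem_sup_right htail)
  · apply sup_le
    · refine le_sInf ?_
      rintro J ⟨T, rfl⟩
      intro g hg
      exact RingHom.mem_ker.mpr (T.ker_I g hg)
    · refine le_sInf ?_
      rintro J ⟨T, rfl⟩
      intro g hg
      have h1 : Ideal.map T.φ (mIdeal k n) ≤ Ideal.span {jetT T.A m} :=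
        Ideal.map_le_iff_le_comap.mpr fun x hx => T.max_to_t x hx
      have h2 : T.φ g ∈ (Ideal.map T.φ (mIdeal k n)) ^ (m + 1) := by
        rw [← Ideal.map_pow]
        exact Ideal.mem_map_of_mem _ hg
      have h3 : (Ideal.map T.φ (mIdeal k n)) ^ (m + 1) ≤
          Ideal.span {jetT T.A m} ^ (m + 1) := Ideal.pow_right_mono h1 _
      rw [Ideal.span_singleton_pow] at h3
      have h4 : (jetT T.A m) ^ (m + 1) = 0 := by
        rw [jetT, ← map_pow, Ideal.Quotient.eq_zero_iff_mem]
        exact Ideal.subset_span rfl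
      rw [h4, Ideal.span_singleton_eq_bot.mpr rfl] at h3
      have h5 := h3 h2
      rw [Ideal.mem_bot] at h5
      exact RingHom.mem_ker.mpr h5
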